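/- Let k be a field of characteristic zero and b ∈ k with b ≠ 0. On the free k-module with basis the monomials x^k y₁^l y₂^s (k,l,s ∈ ℕ), define k-linear maps ∂_x, ∂_{y₁}, ∂_{y₂} by ∂_x(x^k y₁^l y₂^s) = k x^{k−1} y₁^l y₂^s, ∂_{y₁}(x^k y₁^l y₂^s) = l b^{−k} x^k y₁^{l−1} y₂^s, ∂_{y₂}(x^k y₁^l y₂^s) = s b^{k+2l} x^k y₁^l y₂^{s−1}. Then for an element q in this module, ∂_x(q) = ∂_{y₁}(q) = ∂_{y₂}(q) = 0 if and only if q is a scalar multiple of the monomial x⁰y₁⁰y₂⁰ = 1. -/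

import Mathlib

lemma coeff_lemma {K : Type*} [Field K]
    (d : ((ℕ × ℕ × ℕ) →₀ K) →ₗ[K] ((ℕ × ℕ × ℕ) →₀ K))
    (c : ℕ × ℕ × ℕ → K) (f : ℕ × ℕ × ℕ → ℕ × ℕ × ℕ)
    (hd : ∀ p, d (Finsupp.single p 1) = c p • Finsupp.single (f p) 1)
    (t p₀ : ℕ × ℕ × ℕ) (hft : f p₀ = t)
    (huniq : ∀ p, f p = t → c p ≠ 0 → p = p₀)
    (q : (ℕ × ℕ × ℕ) →₀ K) : d q t = c p₀ * q p₀ := by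
  induction q using Finsupp.induction_linear with
  | zero => simp
  | add u v hu hv => simp [Finsupp.add_apply, hu, hv, mul_add]
  | single p a =>
    have hs : (Finsupp.single p a : (ℕ × ℕ × ℕ) →₀ K) = a • Finsupp.single p 1 := by
      simp [Finsupp.smul_single]
    rw [hs, map_smul, hd, Finsupp.smul_apply, Finsupp.smul_apply, Finsupp.smul_apply]
    by_cases hp : p = p₀
    · subst hp
      simp [hft, Finsupp.single_apply, mul_comm, mul_left_comm]
    · rw [Finsupp.single_apply, Finsupp.single_apply, if_neg hp]
      by_cases h2 : f p = t
      · have : c p = 0 := by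
          by_contra h; exact hp (huniq p h2 h)
        simp [this]
      · simp [h2]

/-- The partial derivatives `∂_x, ∂_{y₁}, ∂_{y₂}` of the calculus
on `B¹`, defined on the PBW basis `{x^k y₁^l y₂^s}`, vanish simultaneously on
`q` iff `q` is a scalar multiple of the monomial `1 = x⁰y₁⁰y₂⁰`. -/
theorem stmt11 (K : Type*) [Field K] [CharZero K] (b : K) (hb : b ≠ 0)
    (dX dY1 dY2 : ((ℕ × ℕ × ℕ) →₀ K) →ₗ[K] ((ℕ × ℕ × ℕ) →₀ K))
    (hX : ∀ p : ℕ × ℕ × ℕ,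
      dX (Finsupp.single p 1)
        = (p.1 : K) • Finsupp.single (p.1 - 1, p.2.1, p.2.2) 1)
    (hY1 : ∀ p : ℕ × ℕ × ℕ,
      dY1 (Finsupp.single p 1)
        = ((p.2.1 : K) * b ^ (-(p.1 : ℤ))) • Finsupp.single (p.1, p.2.1 - 1, p.2.2) 1)
    (hY2 : ∀ p : ℕ × ℕ × ℕ,
      dY2 (Finsupp.single p 1)
        = ((p.2.2 : K) * b ^ (p.1 + 2 * p.2.1)) • Finsupp.single (p.1, p.2.1, p.2.2 - 1) 1) :
    ∀ q : (ℕ × ℕ × ℕ) →₀ K,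
      (dX q = 0 ∧ dY1 q = 0 ∧ dY2 q = 0) ↔
      ∃ c : K, q = c • Finsupp.single ((0,0,0) : ℕ × ℕ × ℕ) 1 := by
  intro q
  constructor
  · rintro ⟨h1, h2, h3⟩
    -- x-direction: q (k+1, l, s) = 0
    have hx : ∀ k l s : ℕ, q (k + 1, l, s) = 0 := by
      intro k l s
      have := coeff_lemma dX (fun p => (p.1 : K))
        (fun p => (p.1 - 1, p.2.1, p.2.2)) hX (k, l, s) (k + 1, l, s) rfl
        (by
          rintro ⟨a, c, d⟩ hfp hc
          simp only [Prod.mk.injEq] at hfp ⊢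
          have ha : a ≠ 0 := by
            intro h; exact hc (by simp [h])
          omega)
        q
      rw [h1] at this
      simp only [Finsupp.coe_zero, Pi.zero_apply] at this
      have hk : ((k : K) + 1) ≠ 0 := by
        exact_mod_cast (Nat.cast_add_one_ne_zero k : ((k : K) + 1) ≠ 0)
      have : ((k + 1 : ℕ) : K) * q (k + 1, l, s) = 0 := this.symm
      rcases mul_eq_zero.mp this with h | h
      · exact absurd h (by push_cast; exact hk)
      · exact h
    have hy1 : ∀ k l s : ℕ, q (k, l + 1, s) = 0 := by
      intro k l s
      have := coeff_lemma dY1 (fun p => (p.2.1 : K) * b ^ (-(p.1 : ℤ)))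
        (fun p => (p.1, p.2.1 - 1, p.2.2)) hY1 (k, l, s) (k, l + 1, s) rfl
        (by
          rintro ⟨a, c, d⟩ hfp hc
          simp only [Prod.mk.injEq] at hfp ⊢
          have hcne : c ≠ 0 := by
            intro h; exact hc (by simp [h])
          omega)
        q
      rw [h2] at this
      simp only [Finsupp.coe_zero, Pi.zero_apply] at this
      have hc : ((l : K) + 1) * b ^ (-(k : ℤ)) ≠ 0 :=
        mul_ne_zero (Nat.cast_add_one_ne_zero l) (zpow_ne_zero _ hb)
      have h0 : (((l + 1 : ℕ) : K) * b ^ (-(k : ℤ))) * q (k, l + 1, s) = 0 := this.symm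
      rcases mul_eq_zero.mp h0 with h | h
      · exact absurd h (by push_cast; push_cast at hc; exact hc)
      · exact h
    have hy2 : ∀ k l s : ℕ, q (k, l, s + 1) = 0 := by
      intro k l s
      have := coeff_lemma dY2 (fun p => (p.2.2 : K) * b ^ (p.1 + 2 * p.2.1))
        (fun p => (p.1, p.2.1, p.2.2 - 1)) hY2 (k, l, s) (k, l, s + 1) rfl
        (by
          rintro ⟨a, c, d⟩ hfp hc
          simp only [Prod.mk.injEq] at hfp ⊢
          have hdne : d ≠ 0 := by
            intro h; exact hc (by simp [h])
          omega)
        q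
      rw [h3] at this
      simp only [Finsupp.coe_zero, Pi.zero_apply] at this
      have hc : ((s : K) + 1) * b ^ (k + 2 * l) ≠ 0 :=
        mul_ne_zero (Nat.cast_add_one_ne_zero s) (pow_ne_zero _ hb)
      have h0 : (((s + 1 : ℕ) : K) * b ^ (k + 2 * l)) * q (k, l, s + 1) = 0 := this.symm
      rcases mul_eq_zero.mp h0 with h | h
      · exact absurd h (by push_cast; push_cast at hc; exact hc)
      · exact h
    refine ⟨q (0, 0, 0), ?_⟩
    ext p
    obtain ⟨k, l, s⟩ := p
    rw [Finsupp.smul_apply, Finsupp.single_apply]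
    rcases k with _ | k
    · rcases l with _ | l
      · rcases s with _ | s
        · simp
        · rw [if_neg (by simp [Prod.ext_iff])]
          simpa using hy2 0 0 s
      · rw [if_neg (by simp [Prod.ext_iff])]
        simpa using hy1 0 l s
    · rw [if_neg (by simp [Prod.ext_iff])]
      simpa using hx k l s
  · rintro ⟨c, rfl⟩
    refine ⟨?_, ?_, ?_⟩
    · rw [map_smul, hX]; simp
    · rw [map_smul, hY1]; simp
    · rw [map_smul, hY2]; simp
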